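/- Let (Ω, μ) be a finite measure space, g : Ω → ℝ integrable, c ∈ ℝ with μ({x : g(x) = c}) = 0, and V ≥ 0. Let D = {x : g(x) ≥ c} and assume μ(D) = V. If E ⊆ Ω is measurable with μ(E) = V and ∫_E g dμ = ∫_D g dμ, then μ(E Δ D) = 0; that is, the superlevel set is the unique (up to null sets) maximizer of ∫_F g dμ among measurable sets F of measure V. -/

import Mathlib

open MeasureTheory

theorem bathtub_aux {Ω : Type*} [MeasurableSpace Ω] (μ : Measure Ω)
    [IsFiniteMeasure μ] (g : Ω → ℝ) (hg : Integrable g μ) (hgm : Measurable g)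
    (c : ℝ)
    (hc : μ {x | g x = c} = 0)
    (E : Set Ω) (hE : MeasurableSet E) (hEV : μ E = μ {x | c ≤ g x})
    (heq : ∫ x in E, g x ∂μ = ∫ x in {x | c ≤ g x}, g x ∂μ) :
    μ (symmDiff E {x | c ≤ g x}) = 0 := by
  set D : Set Ω := {x | c ≤ g x} with hD
  have hDm : MeasurableSet D := measurableSet_le measurable_const hgm
  set A := E \ D with hA
  set B := D \ E with hB
  have hAm : MeasurableSet A := hE.diff hDm
  have hBm : MeasurableSet B := hDm.diff hE
  -- μ A = μ B
  have h1 : μ (E ∩ D) + μ A = μ E := measure_inter_add_diff E hDm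
  have h2 : μ (D ∩ E) + μ B = μ D := measure_inter_add_diff D hE
  rw [Set.inter_comm] at h2
  have hAB : μ A = μ B := by
    have := h1.trans (hEV.trans h2.symm)
    exact WithTop.add_left_cancel (measure_ne_top μ _) this
  -- ∫_A g = ∫_B g
  have hd1 : Disjoint (E ∩ D) (E \ D) := Set.disjoint_sdiff_right.mono_left Set.inter_subset_right
  have hd2 : Disjoint (E ∩ D) (D \ E) := Set.disjoint_sdiff_right.mono_left Set.inter_subset_left
  have hiE : ∫ x in E, g x ∂μ = (∫ x in E ∩ D, g x ∂μ) + ∫ x in A, g x ∂μ := by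
    rw [← setIntegral_union hd1 hAm (hg.integrableOn) (hg.integrableOn), Set.inter_union_diff]
  have hiD : ∫ x in D, g x ∂μ = (∫ x in E ∩ D, g x ∂μ) + ∫ x in B, g x ∂μ := by
    rw [← setIntegral_union hd2 hBm (hg.integrableOn) (hg.integrableOn), Set.inter_comm,
      Set.inter_union_diff]
  have hint : ∫ x in A, g x ∂μ = ∫ x in B, g x ∂μ := by
    have := heq
    rw [hiE, hiD] at this
    linarith
  -- the two nonnegative integrals
  have hintA : IntegrableOn (fun x => c - g x) A μ :=
    (integrableOn_const (measure_ne_top μ A)).sub hg.integrableOn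
  have hintB : IntegrableOn (fun x => g x - c) B μ :=
    hg.integrableOn.sub (integrableOn_const (measure_ne_top μ B))
  have hvalA : ∫ x in A, (c - g x) ∂μ = (μ A).toReal * c - ∫ x in A, g x ∂μ := by
    rw [integral_sub (integrableOn_const (C := c) (measure_ne_top μ A)) hg.integrableOn,
      setIntegral_const, smul_eq_mul, measureReal_def]
  have hvalB : ∫ x in B, (g x - c) ∂μ = (∫ x in B, g x ∂μ) - (μ B).toReal * c := by
    rw [integral_sub hg.integrableOn (integrableOn_const (C := c) (measure_ne_top μ B)),
      setIntegral_const, smul_eq_mul, measureReal_def]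
  have hnnA : 0 ≤ ∫ x in A, (c - g x) ∂μ := by
    apply setIntegral_nonneg hAm
    intro x hx
    have : ¬ c ≤ g x := hx.2
    linarith [lt_of_not_ge this]
  have hnnB : 0 ≤ ∫ x in B, (g x - c) ∂μ := by
    apply setIntegral_nonneg hBm
    intro x hx
    have : c ≤ g x := hx.1
    linarith
  have hsum : ∫ x in A, (c - g x) ∂μ + ∫ x in B, (g x - c) ∂μ = 0 := by
    rw [hvalA, hvalB, hAB, hint]; ring
  have hzA : ∫ x in A, (c - g x) ∂μ = 0 := by linarith
  have hzB : ∫ x in B, (g x - c) ∂μ = 0 := by linarith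
  -- conclude g = c a.e. on A and B, contradiction with hc
  have keyA : μ A = 0 := by
    have h0 : (fun x => c - g x) =ᵐ[μ.restrict A] 0 := by
      have hnn : 0 ≤ᵐ[μ.restrict A] fun x => c - g x := by
        refine (ae_restrict_iff' hAm).2 (ae_of_all _ ?_)
        intro x hx
        have : ¬ c ≤ g x := hx.2
        simp only [Pi.zero_apply]
        linarith [lt_of_not_ge this]
      exact (integral_eq_zero_iff_of_nonneg_ae hnn hintA).1 hzA
    have hne : ∀ᵐ x ∂(μ.restrict A), g x ≠ c := by
      refine ae_restrict_of_ae ?_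
      have : μ {x | ¬ g x ≠ c} = 0 := by simpa using hc
      exact (ae_iff).2 (by simpa using this)
    have : ∀ᵐ x ∂(μ.restrict A), False := by
      filter_upwards [h0, hne] with x h1 h2
      exact h2 (by simpa using (sub_eq_zero.1 h1).symm)
    have h0' : μ.restrict A Set.univ = 0 := by
      simpa [ae_iff] using this
    rwa [Measure.restrict_apply_univ] at h0'
  have keyB : μ B = 0 := by rw [← hAB]; exact keyA
  have hle : μ (symmDiff E D) ≤ 0 := calc
    μ (symmDiff E D) = μ (A ∪ B) := by rw [Set.symmDiff_def]
    _ ≤ μ A + μ B := measure_union_le _ _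
    _ = 0 := by rw [keyA, keyB, add_zero]
  exact le_antisymm hle zero_le

/-- Uniqueness in the bathtub principle: on a finite measure space, if the level set
`{g = c}` is null, `D = {g ≥ c}` has measure `V`, and a measurable set `E` with
`μ E = V` achieves `∫_E g dμ = ∫_D g dμ`, then `μ (E Δ D) = 0`: the superlevel set is
the unique (up to null sets) maximizer among sets of measure `V`. -/
theorem bathtub_superlevel_unique {Ω : Type*} [MeasurableSpace Ω] (μ : Measure Ω)
    [IsFiniteMeasure μ] (g : Ω → ℝ) (hg : Integrable g μ)
    (c V : ℝ) (hV : 0 ≤ V)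
    (hc : μ {x | g x = c} = 0)
    (hDV : μ {x | c ≤ g x} = ENNReal.ofReal V)
    (E : Set Ω) (hE : MeasurableSet E) (hEV : μ E = ENNReal.ofReal V)
    (heq : ∫ x in E, g x ∂μ = ∫ x in {x | c ≤ g x}, g x ∂μ) :
    μ (symmDiff E {x | c ≤ g x}) = 0 := by
  have hsm := hg.1
  set g' : Ω → ℝ := hsm.mk g with hg'def
  have hg'm : StronglyMeasurable g' := hsm.stronglyMeasurable_mk
  have hgg' : g =ᵐ[μ] g' := hsm.ae_eq_mk
  set D : Set Ω := {x | c ≤ g x} with hDdef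
  set D' : Set Ω := {x | c ≤ g' x} with hD'def
  have hDD' : D =ᵐ[μ] D' := by
    filter_upwards [hgg'] with x hx
    change (c ≤ g x) = (c ≤ g' x)
    rw [hx]
  have hc' : μ {x | g' x = c} = 0 := by
    have h : ({x | g x = c} : Set Ω) =ᵐ[μ] {x | g' x = c} := by
      filter_upwards [hgg'] with x hx
      change (g x = c) = (g' x = c)
      rw [hx]
    rw [← measure_congr h, hc]
  have hg'i : Integrable g' μ := hg.congr hgg'
  have hEV' : μ E = μ D' := by
    rw [hEV, ← hDV, measure_congr hDD']
  have heq' : ∫ x in E, g' x ∂μ = ∫ x in D', g' x ∂μ := by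
    have h1 : ∫ x in E, g' x ∂μ = ∫ x in E, g x ∂μ :=
      integral_congr_ae (ae_restrict_of_ae hgg'.symm)
    have h2 : ∫ x in D, g x ∂μ = ∫ x in D, g' x ∂μ :=
      integral_congr_ae (ae_restrict_of_ae hgg')
    have h3 : ∫ x in D, g' x ∂μ = ∫ x in D', g' x ∂μ :=
      setIntegral_congr_set hDD'
    rw [h1, heq, h2, h3]
  have hmain : μ (symmDiff E D') = 0 :=
    bathtub_aux μ g' hg'i hg'm.measurable c hc' E hE hEV' heq'
  have hsd : (symmDiff E D : Set Ω) =ᵐ[μ] symmDiff E D' := by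
    filter_upwards [hDD'] with x hx
    change (x ∈ symmDiff E D) = (x ∈ symmDiff E D')
    simp only [Set.mem_symmDiff]
    rw [show (x ∈ D) = (x ∈ D') from hx]
  rw [measure_congr hsd]
  exact hmain
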